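/- For any function f : X → Y between topological spaces, bas(f) ≤ Lev¹(f), i.e., if the transfinite sequence L¹_0 = X, L¹_{α+1} = {x ∈ L¹_α : f restricted to L¹_α is discontinuous at x}, L¹_γ = ⋂_{α<γ} L¹_α (γ limit) reaches ∅ at stage λ, then X can be partitioned into at most |λ| many sets on each of which f is continuous. -/

import Mathlib

universe u v

/-- The (unclosed) level hierarchy `L¹_α(f)`. -/
noncomputable def L1 {X : Type u} {Y : Type v} [TopologicalSpace X] [TopologicalSpace Y]
    (f : X → Y) (o : Ordinal.{u}) : Set X :=
  Ordinal.limitRecOn o Set.univ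
    (fun _ ih => {x | x ∈ ih ∧ ¬ ContinuousWithinAt f ih x})
    (fun o _ ih => ⋂ p : {o' : Ordinal.{u} // o' < o}, ih p.1 p.2)

def IsContPartition {X : Type*} {Y : Type*} [TopologicalSpace X] [TopologicalSpace Y]
    (f : X → Y) (p : Set (Set X)) : Prop :=
  (∀ U ∈ p, ∀ V ∈ p, U ≠ V → Disjoint U V) ∧ ⋃₀ p = Set.univ ∧
    ∀ U ∈ p, Continuous fun x : U => f x.1

section aux

variable {X : Type u} {Y : Type v} [TopologicalSpace X] [TopologicalSpace Y] (f : X → Y)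

lemma L1_zero : L1 f 0 = Set.univ := Ordinal.limitRecOn_zero _ _ _

lemma L1_succ (o : Ordinal.{u}) :
    L1 f (Order.succ o) = {x | x ∈ L1 f o ∧ ¬ ContinuousWithinAt f (L1 f o) x} :=
  Ordinal.limitRecOn_succ _ _ _ _

lemma L1_limit (o : Ordinal.{u}) (h : Order.IsSuccLimit o) :
    L1 f o = ⋂ p : {o' : Ordinal.{u} // o' < o}, L1 f p.1 :=
  Ordinal.limitRecOn_limit _ _ _ _ h

lemma L1_mono : ∀ b a : Ordinal.{u}, a ≤ b → L1 f b ⊆ L1 f a := by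
  intro b
  induction b using Ordinal.induction with
  | h b ih =>
    intro a hab
    rcases Ordinal.zero_or_succ_or_isSuccLimit b with hb | ⟨c, rfl⟩ | hb
    · subst hb; rw [nonpos_iff_eq_zero.mp hab]
    · rcases eq_or_lt_of_le hab with rfl | hlt
      · exact subset_rfl
      · have h1 : L1 f (Order.succ c) ⊆ L1 f c := by
          rw [L1_succ]; exact fun x hx => hx.1
        exact h1.trans (ih c (Order.lt_succ c) a (Order.lt_succ_iff.mp hlt))
    · rcases eq_or_lt_of_le hab with rfl | hlt
      · exact subset_rfl
      · rw [L1_limit f b hb]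
        exact Set.iInter_subset (fun p : {o' : Ordinal.{u} // o' < b} => L1 f p.1) ⟨a, hlt⟩

end aux

/-- `bas(f) ≤ Lev¹(f)`: if the hierarchy `L¹` reaches `∅` at stage `lam`, then `X`
admits a partition into at most `|lam|` sets of continuity for `f`. -/
theorem stmt11 {X : Type u} {Y : Type v} [TopologicalSpace X] [TopologicalSpace Y]
    (f : X → Y) (lam : Ordinal.{u}) (h : L1 f lam = ∅) :
    ∃ p : Set (Set X), IsContPartition f p ∧ Cardinal.mk ↥p ≤ lam.card := by
  set g : Ordinal.{u} → Set X := fun a => L1 f a \ L1 f (Order.succ a) with hg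
  refine ⟨g '' Set.Iio lam, ⟨?_, ?_, ?_⟩, ?_⟩
  · -- disjointness
    rintro U ⟨a, -, rfl⟩ V ⟨b, -, rfl⟩ hne
    rcases lt_trichotomy a b with hab | rfl | hab
    · have : g b ⊆ L1 f (Order.succ a) := fun x hx =>
        L1_mono f b (Order.succ a) (Order.succ_le_of_lt hab) hx.1
      exact Set.disjoint_left.mpr fun x hx hxb => hx.2 (this hxb)
    · exact absurd rfl hne
    · have : g a ⊆ L1 f (Order.succ b) := fun x hx =>
        L1_mono f a (Order.succ b) (Order.succ_le_of_lt hab) hx.1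
      exact Set.disjoint_right.mpr fun x hx hxa => hx.2 (this hxa)
  · -- cover
    apply Set.eq_univ_of_forall
    intro x
    have hx0 : x ∉ L1 f lam := by rw [h]; exact Set.notMem_empty x
    have hex : ∃ a, x ∉ L1 f a := ⟨lam, hx0⟩
    classical
    let a := sInf {a : Ordinal.{u} | x ∉ L1 f a}
    have ha : x ∉ L1 f a := csInf_mem (s := {a : Ordinal.{u} | x ∉ L1 f a}) hex
    have hmin : ∀ b < a, x ∈ L1 f b := fun b hb => by
      by_contra hxb
      exact hb.not_ge (csInf_le' hxb)
    rcases Ordinal.zero_or_succ_or_isSuccLimit a with h0 | ⟨c, hc⟩ | hlim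
    · exfalso; rw [h0, L1_zero] at ha; exact ha (Set.mem_univ x)
    · have hc' : x ∈ L1 f c := hmin c (by rw [← hc]; exact Order.lt_succ c)
      have halam : a ≤ lam := csInf_le' hx0
      have hclam : c < lam := lt_of_lt_of_le (by rw [← hc]; exact Order.lt_succ c) halam
      refine ⟨g c, ⟨c, hclam, rfl⟩, hc', ?_⟩
      rw [hc]; exact ha
    · exfalso
      apply ha
      rw [L1_limit f a hlim]
      exact Set.mem_iInter.mpr fun p => hmin p.1 p.2
  · -- continuity
    rintro U ⟨a, -, rfl⟩
    apply ContinuousOn.restrict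
    intro x hx
    have hcont : ContinuousWithinAt f (L1 f a) x := by
      by_contra hnc
      exact hx.2 ((L1_succ f a) ▸ ⟨hx.1, hnc⟩)
    exact hcont.mono (fun y hy => hy.1)
  · -- cardinality
    have h1 : Cardinal.lift.{u+1} (Cardinal.mk ↥(g '' Set.Iio lam)) ≤
        Cardinal.lift.{u} (Cardinal.mk ↥(Set.Iio lam)) := Cardinal.mk_image_le_lift
    rw [Ordinal.mk_Iio_ordinal, Cardinal.lift_lift] at h1
    exact Cardinal.lift_le.mp h1
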